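/- arXiv:1701.03297 — 5 statements merged into one kernel-verified Lean document; each statement's English description precedes it below -/
import Mathlib

section
/- Let G be a finite group acting on the alphabet A, let f, g, h be in G, and let x, y, z be words in A* with 1 ≤ |x| < |z| and z·g(y) = h(x)·f(z). Then there exist words r (nonempty) and s and natural numbers e and j with 0 ≤ j < |G| such that |rs| = |x| and z = ((rs)·f(rs)···f^{|G|−1}(rs))^e · (rs)·f(rs)···f^{j−1}(rs)·f^j(r). -/
private lemma twc_take_app {α : Type*} (l₁ l₂ : List α) (ρ : ℕ) :
    (l₁ ++ l₂).take (l₁.length + ρ) = l₁ ++ l₂.take ρ := by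
  induction l₁ with
  | nil => simp
  | cons a l ih =>
    simp only [List.cons_append, List.length_cons]
    rw [Nat.add_right_comm, List.take_succ_cons, ih]

private lemma twc_W_length {A G : Type*} [Group G] [MulAction G A] (f : G) (w : List A) (n : ℕ) :
    (((List.range n).map (fun i => w.map (fun a => (f ^ i) • a))).flatten).length
      = n * w.length := by
  induction n with
  | zero => simp
  | succ n ih => simp [List.range_succ, ih]; ring

private lemma twc_key {A G : Type*} [Group G] [MulAction G A] (f : G) (w z u : List A)
    (heq : z ++ u = w ++ z.map (fun a => f • a)) (n : ℕ) :
    z <+: ((List.range n).map (fun i => w.map (fun a => (f ^ i) • a))).flatten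
          ++ z.map (fun a => (f ^ n) • a) := by
  induction n with
  | zero => simp [one_smul]
  | succ n ih =>
    obtain ⟨t, ht⟩ := ih
    refine ⟨t ++ u.map (fun a => (f ^ n) • a), ?_⟩
    have hW1 : ((List.range (n+1)).map (fun i => w.map (fun a => (f ^ i) • a))).flatten
        = ((List.range n).map (fun i => w.map (fun a => (f ^ i) • a))).flatten
          ++ w.map (fun a => (f ^ n) • a) := by
      simp [List.range_succ]
    rw [hW1, List.append_assoc, ← List.append_assoc z t, ht, List.append_assoc]
    congr 1
    have hma : z.map (fun a => (f ^ n) • a) ++ u.map (fun a => (f ^ n) • a)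
        = (z ++ u).map (fun a => (f ^ n) • a) := (List.map_append).symm
    rw [hma, heq, List.map_append, List.map_map]
    congr 1
    simp [Function.comp_def, pow_succ, mul_smul]

private lemma twc_shift {A G : Type*} [Group G] [MulAction G A] (f : G) (w : List A) (c a : ℕ)
    (hc : f ^ c = 1) :
    ((List.range (c + a)).map (fun i => w.map (fun b => (f ^ i) • b))).flatten
      = ((List.range c).map (fun i => w.map (fun b => (f ^ i) • b))).flatten
        ++ ((List.range a).map (fun i => w.map (fun b => (f ^ i) • b))).flatten := by
  rw [List.range_add, List.map_append, List.flatten_append, List.map_map]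
  simp [Function.comp_def, pow_add, hc]

private lemma twc_rep {A G : Type*} [Group G] [MulAction G A] (f : G) (w : List A) (c j : ℕ)
    (hc : f ^ c = 1) (e : ℕ) :
    ((List.range (e * c + j)).map (fun i => w.map (fun b => (f ^ i) • b))).flatten
      = (List.replicate e
          (((List.range c).map (fun i => w.map (fun b => (f ^ i) • b))).flatten)).flatten
        ++ ((List.range j).map (fun i => w.map (fun b => (f ^ i) • b))).flatten := by
  induction e with
  | zero => simp
  | succ e ih =>
    have h1 : (e + 1) * c + j = c + (e * c + j) := by ring
    rw [h1, twc_shift f w c _ hc, ih, List.replicate_succ, List.flatten_cons, List.append_assoc]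

/-- Twisted conjugacy (Proposition 4.1): if `z·g(y) = h(x)·f(z)` with `1 ≤ |x| < |z|`,
then `z = ((rs)·f(rs)···f^{|G|-1}(rs))^e · (rs)·f(rs)···f^{j-1}(rs) · f^j(r)`
for some nonempty `r`, word `s` with `|rs| = |x|`, and `e, j` with `j < |G|`. -/
theorem stmt2 {A G : Type*} [Group G] [Fintype G] [MulAction G A]
    (f g h : G) (x y z : List A)
    (hx : 1 ≤ x.length) (hxz : x.length < z.length)
    (heq : z ++ y.map (fun a => g • a) =
           x.map (fun a => h • a) ++ z.map (fun a => f • a)) :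
    ∃ r s : List A, r ≠ [] ∧ ∃ e j : ℕ, j < Fintype.card G ∧
      (r ++ s).length = x.length ∧
      z = (List.replicate e
            (((List.range (Fintype.card G)).map
              (fun i => (r ++ s).map (fun a => (f ^ i) • a))).flatten)).flatten
          ++ ((List.range j).map (fun i => (r ++ s).map (fun a => (f ^ i) • a))).flatten
          ++ r.map (fun a => (f ^ j) • a) := by
  classical
  set w : List A := x.map (fun a => h • a) with hw
  have hwlen : w.length = x.length := by simp [hw]
  set m := x.length with hm
  set n := z.length with hn
  have hm1 : 1 ≤ m := hx
  have hn1 : 1 ≤ n := le_trans hm1 (le_of_lt hxz)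
  set k := (n - 1) / m with hk
  set ρ := (n - 1) % m + 1 with hρ
  have hρ1 : 1 ≤ ρ := Nat.le_add_left 1 _
  have hρm : ρ ≤ m := Nat.succ_le_of_lt (Nat.mod_lt _ (by omega))
  have hnkρ : n = k * m + ρ := by
    have h0 := Nat.div_add_mod (n - 1) m
    rw [hk, hρ, Nat.mul_comm]
    omega
  set c := Fintype.card G with hc
  have hc1 : 0 < c := Fintype.card_pos
  set e := k / c with he
  set j := k % c with hj
  have hjc : j < c := Nat.mod_lt _ hc1
  have hkej : k = e * c + j := by
    have h0 := Nat.div_add_mod k c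
    rw [he, hj, Nat.mul_comm]
    omega
  have hfc : f ^ c = 1 := pow_card_eq_one
  have hfk : f ^ k = f ^ j := by
    rw [hkej, pow_add, Nat.mul_comm, pow_mul, hfc, one_pow, one_mul]
  have hpref := twc_key f w z (y.map (fun a => g • a)) heq (k + 1)
  set W : ℕ → List A := fun N =>
    ((List.range N).map (fun i => w.map (fun a => (f ^ i) • a))).flatten with hWdef
  have hWlen : ∀ N, (W N).length = N * m := fun N => by
    rw [hWdef]; rw [twc_W_length, hwlen]
  obtain ⟨t, ht⟩ := hpref
  have hzeq : z = W k ++ (w.map (fun a => (f ^ k) • a)).take ρ := by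
    have h1 : z = (W (k + 1) ++ z.map (fun a => (f ^ (k+1)) • a)).take n := by
      rw [← ht, hn, List.take_left]
    have h2 : W (k + 1) = W k ++ w.map (fun a => (f ^ k) • a) := by
      rw [hWdef]
      simp [List.range_succ]
    have hlen : n = (W k).length + ρ := by rw [hWlen]; omega
    rw [h2, List.append_assoc] at h1
    rw [h1, hlen, twc_take_app]
    congr 1
    rw [List.take_append]
    have h3 : ρ - (w.map (fun a => (f ^ k) • a)).length = 0 := by
      simp only [List.length_map, hwlen]; omega
    rw [h3, List.take_zero, List.append_nil]
  refine ⟨w.take ρ, w.drop ρ, ?_, e, j, hjc, ?_, ?_⟩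
  · intro hnil
    have h4 : (w.take ρ).length = 0 := by rw [hnil]; rfl
    rw [List.length_take, hwlen] at h4
    omega
  · rw [List.take_append_drop, hwlen]
  · simp only [List.take_append_drop]
    rw [hzeq, hfk, ← List.map_take]
    rw [hWdef]
    dsimp only
    rw [hkej, twc_rep f w c j hfc e, List.append_assoc]
end

section
/- Let G be a finite group acting on the alphabet A, let ε be a natural number, let f, g, h be in G, and let x, y, z be words in A* with 1 ≤ |x| ≤ ε and |z| ≥ 10·|G|·ε. If z·g(y) = h(x)·f(z), then z has a period of length at most |G|·ε. -/
/-- `w` has period `p`: letters at distance `p` agree. -/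
def hasPeriod {A : Type*} (w : List A) (p : ℕ) : Prop :=
  ∀ i, i + p < w.length → w[i]? = w[i + p]?

/-- Corollary 4.2 (first part): if `z·g(y) = h(x)·f(z)` with `1 ≤ |x| ≤ ε` and
`|z| ≥ 10·|G|·ε`, then `z` has a period of length at most `|G|·ε`. -/
theorem stmt3 {A G : Type*} [Group G] [Fintype G] [MulAction G A]
    (ε : ℕ) (f g h : G) (x y z : List A)
    (hx1 : 1 ≤ x.length) (hxε : x.length ≤ ε)
    (hz : 10 * Fintype.card G * ε ≤ z.length)
    (heq : z ++ y.map (fun a => g • a) =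
           x.map (fun a => h • a) ++ z.map (fun a => f • a)) :
    ∃ p : ℕ, 0 < p ∧ p ≤ Fintype.card G * ε ∧ hasPeriod z p := by
  set d := x.length with hd
  -- basic shift: z.get? (i+d) = f • z.get? i
  have step : ∀ i, i + d < z.length →
      z[i + d]? = (z[i]?).map (fun a => f • a) := by
    intro i hi
    have := congrArg (fun l : List A => l[i + d]?) heq
    rw [List.getElem?_append_left hi] at this
    rw [List.getElem?_append_right (by simp [hd])] at this
    simp only [List.length_map, ← hd, Nat.add_sub_cancel, List.getElem?_map] at this
    exact this
  have claim : ∀ k i, i + k * d < z.length →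
      z[i + k * d]? = (z[i]?).map (fun a => (f ^ k) • a) := by
    intro k
    induction k with
    | zero => intro i hi; simp
    | succ k ih =>
      intro i hi
      have hle : i + d ≤ i + (k + 1) * d := by nlinarith
      have h1 : i + (k + 1) * d = (i + d) + k * d := by ring
      rw [h1] at hi ⊢
      rw [ih (i + d) hi, step i (lt_of_le_of_lt (h1 ▸ hle) hi)]
      rw [Option.map_map]
      congr 1
      funext a
      simp [mul_smul, pow_succ, Function.comp]
  refine ⟨orderOf f * d, ?_, ?_, ?_⟩
  · exact Nat.mul_pos (orderOf_pos f) hx1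
  · exact Nat.mul_le_mul (orderOf_le_card_univ) hxε
  · intro i hi
    rw [claim (orderOf f) i hi, pow_orderOf_eq_one]
    simp
end

section
/- Let G be a finite group acting on the alphabet A, and suppose z·g(y) = h(x)·f(z) with 1 ≤ |x| < |z|. If z = α·w·β is any factorization with |w| = |x|, then every letter b occurring in z satisfies b = f'(a) for some f' in G and some letter a occurring in w. -/
/-- Corollary 4.2 (second part): if `z·g(y) = h(x)·f(z)` with `1 ≤ |x| < |z|`
and `z = α·w·β` with `|w| = |x|`, then every letter `b` occurring in `z`
equals `f'(a)` for some `f' ∈ G` and some letter `a` occurring in `w`. -/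
theorem stmt4 {A G : Type*} [Group G] [Fintype G] [MulAction G A]
    (f g h : G) (x y z α w β : List A)
    (hx : 1 ≤ x.length) (hxz : x.length < z.length)
    (heq : z ++ y.map (fun a => g • a) =
           x.map (fun a => h • a) ++ z.map (fun a => f • a))
    (hfac : z = α ++ w ++ β) (hw : w.length = x.length) :
    ∀ b ∈ z, ∃ f' : G, ∃ a ∈ w, b = f' • a := by
  set k := x.length with hk
  have hzlen : z.length = α.length + k + β.length := by
    rw [hfac]; simp [hw]; omega
  have hαk : α.length + k ≤ z.length := by omega
  have step : ∀ i (hi : i + k < z.length),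
      z[i + k]'hi = f • z[i]'(by omega) := by
    intro i hi
    have hL : i + k < (z ++ y.map (fun a => g • a)).length := by
      simp; omega
    have hR : i + k < (x.map (fun a => h • a) ++ z.map (fun a => f • a)).length := by
      rw [← heq]; exact hL
    have h1 : (z ++ y.map (fun a => g • a))[i + k]'hL
        = (x.map (fun a => h • a) ++ z.map (fun a => f • a))[i + k]'hR := by
      simp only [heq]
    rw [List.getElem_append_left hi,
        List.getElem_append_right (by simp; omega)] at h1
    simpa [← hk] using h1
  have hwz : ∀ t (ht : t < k),
      z[α.length + t]'(by omega) = w[t]'(by omega) := by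
    intro t ht
    have h0 : z[α.length + t]'(by omega)
        = (α ++ w ++ β)[α.length + t]'(by rw [← hfac]; omega) :=
      getElem_congr_coll hfac
    rw [h0, List.getElem_append_left (by simp; omega),
        List.getElem_append_right (by omega),
        getElem_congr_idx (show α.length + t - α.length = t by omega)]
  have A : ∀ j (hj : j < z.length), α.length ≤ j →
      ∃ f' : G, ∃ a ∈ w, z[j]'hj = f' • a := by
    intro j
    induction j using Nat.strong_induction_on with
    | _ j ih =>
      intro hj hαj
      by_cases hcase : j < α.length + k
      · refine ⟨1, w[j - α.length]'(by omega), List.getElem_mem _, ?_⟩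
        rw [one_smul]
        have h2 := hwz (j - α.length) (by omega)
        rw [getElem_congr_idx (show α.length + (j - α.length) = j by omega)] at h2
        exact h2
      · obtain ⟨f', a, ha, hfa⟩ := ih (j - k) (by omega) (by omega) (by omega)
        refine ⟨f * f', a, ha, ?_⟩
        have h2 := step (j - k) (by omega)
        rw [getElem_congr_idx (show j - k + k = j by omega)] at h2
        rw [h2, hfa, mul_smul]
  have B : ∀ d j (hj : j < z.length), α.length - j ≤ d →
      ∃ f' : G, ∃ a ∈ w, z[j]'hj = f' • a := by
    intro d
    induction d with
    | zero => intro j hj hd; exact A j hj (by omega)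
    | succ d ih =>
      intro j hj hd
      by_cases hc : α.length ≤ j
      · exact A j hj hc
      · have hjk : j + k < z.length := by omega
        obtain ⟨f', a, ha, hfa⟩ := ih (j + k) hjk (by omega)
        refine ⟨f⁻¹ * f', a, ha, ?_⟩
        have h2 := step j hjk
        rw [mul_smul, ← hfa, h2, inv_smul_smul]
  intro b hb
  obtain ⟨j, hj, rfl⟩ := List.mem_iff_getElem.mp hb
  exact B α.length j hj (by omega)
end

section
/- Let w be a word that is δ-periodic (has a period at most δ) with |w| ≥ 2δ, and suppose w = p^e r = q^f s where p, q are primitive words with |p| ≤ |q| ≤ δ, r is a nonempty prefix of p, and s is a nonempty prefix of q. Then p = q, e = f ≥ 1, and r = s. -/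
/-- A word is primitive if it is nonempty and not a proper power `r^e`, `e ≥ 2`. -/
def Primitive {A : Type*} (p : List A) : Prop :=
  p ≠ [] ∧ ∀ (r : List A) (e : ℕ), 2 ≤ e → p ≠ (List.replicate e r).flatten

lemma join_def {A : Type*} (l : List (List A)) : l.flatten = l.flatten := rfl

lemma hasPeriod_getElem? {A : Type*} {w : List A} {k : ℕ} (h : hasPeriod w k) :
    ∀ i, i + k < w.length → w[i]? = w[i + k]? := by
  unfold hasPeriod at h
  exact h

lemma hasPeriod_of_prefix {A : Type*} {w v : List A} {k : ℕ} (h : w <+: v)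
    (hv : hasPeriod v k) : hasPeriod w k := by
  obtain ⟨t, rfl⟩ := h
  unfold hasPeriod
  intro i hi
  have h1 := hasPeriod_getElem? hv i (by simp; omega)
  rw [List.getElem?_append_left (by omega), List.getElem?_append_left hi] at h1
  exact h1

lemma length_flatten_replicate {A : Type*} (e : ℕ) (p : List A) :
    ((List.replicate e p).flatten).length = e * p.length := by
  induction e with
  | zero => simp
  | succ n ih => simp [List.replicate_succ, ih]; ring

lemma flatten_replicate_getElem? {A : Type*} (p : List A) (hp : p ≠ []) :
    ∀ (e i : ℕ), i < e * p.length →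
      ((List.replicate e p).flatten)[i]? = p[i % p.length]? := by
  intro e
  induction e with
  | zero => intro i hi; omega
  | succ n ih =>
    intro i hi
    have hplen : 0 < p.length := List.length_pos_iff.mpr hp
    rw [List.replicate_succ, List.flatten_cons]
    by_cases h : i < p.length
    · rw [List.getElem?_append_left h, Nat.mod_eq_of_lt h]
    · push_neg at h
      rw [Nat.succ_mul] at hi
      rw [List.getElem?_append_right h, ih (i - p.length) (by omega),
        Nat.mod_eq_sub_mod h]

lemma hasPeriod_flatten_replicate {A : Type*} (e : ℕ) (p : List A) (hp : p ≠ []) :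
    hasPeriod ((List.replicate e p).flatten) p.length := by
  unfold hasPeriod
  intro i hi
  rw [length_flatten_replicate] at hi
  rw [flatten_replicate_getElem? p hp e i (by omega),
    flatten_replicate_getElem? p hp e (i + p.length) (by omega),
    Nat.add_mod_right]

lemma hasPeriod_iter {A : Type*} {w : List A} {g : ℕ} (h : hasPeriod w g) :
    ∀ (k i : ℕ), i + k * g < w.length → w[i]? = w[i + k * g]? := by
  intro k
  induction k with
  | zero => simp
  | succ n ih =>
    intro i hi
    rw [Nat.succ_mul] at hi
    have h1 := ih i (by omega)
    have h2 := hasPeriod_getElem? h (i + n * g) (by omega)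
    rw [h1, h2]
    congr 1
    rw [Nat.succ_mul]
    ring

lemma eq_flatten_of_hasPeriod {A : Type*} {x : List A} {g : ℕ} (hg : 0 < g)
    (hdvd : g ∣ x.length) (h : hasPeriod x g) :
    x = (List.replicate (x.length / g) (x.take g)).flatten := by
  rcases eq_or_ne x [] with rfl | hx
  · simp
  have hxlen : 0 < x.length := List.length_pos_iff.mpr hx
  have hgle : g ≤ x.length := Nat.le_of_dvd hxlen hdvd
  have htg : (x.take g).length = g := by simp [Nat.min_eq_left hgle]
  have htne : x.take g ≠ [] := by
    intro hc
    rw [← List.length_eq_zero_iff, htg] at hc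
    omega
  have hjl : ((List.replicate (x.length / g) (x.take g)).flatten).length = x.length := by
    rw [length_flatten_replicate, htg, Nat.div_mul_cancel hdvd]
  apply List.ext_getElem?
  intro i
  by_cases hi : i < x.length
  · rw [flatten_replicate_getElem? _ htne _ i (by rw [htg, Nat.div_mul_cancel hdvd]; exact hi)]
    rw [htg]
    have him : i % g < g := Nat.mod_lt _ hg
    rw [List.getElem?_take, if_pos him]
    have := hasPeriod_iter h (i / g) (i % g) (by rw [Nat.mod_add_div']; exact hi)
    rw [Nat.mod_add_div'] at this
    exact this.symm
  · rw [List.getElem?_eq_none (by omega), List.getElem?_eq_none (by omega)]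

lemma primitive_period {A : Type*} {p : List A} {g : ℕ} (hp : Primitive p)
    (hg : 0 < g) (hdvd : g ∣ p.length) (h : hasPeriod p g) : g = p.length := by
  have hplen : 0 < p.length := List.length_pos_iff.mpr hp.1
  have hgle : g ≤ p.length := Nat.le_of_dvd hplen hdvd
  rcases eq_or_lt_of_le hgle with heq | hlt
  · exact heq
  · exfalso
    have hjoin := eq_flatten_of_hasPeriod hg hdvd h
    refine hp.2 (p.take g) (p.length / g) ?_ (by rw [join_def]; exact hjoin)
    have h2g : 2 * g ≤ p.length := by
      obtain ⟨c, hc⟩ := hdvd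
      rcases Nat.lt_or_ge c 2 with h2 | h2
      · interval_cases c <;> omega
      · nlinarith
    exact (Nat.le_div_iff_mul_le hg).mpr h2g

/-- Fine and Wilf, ordered version. -/
lemma fine_wilf_aux {A : Type*} : ∀ (n a b : ℕ) (w : List A), 0 < a → a ≤ b →
    a + b ≤ w.length → b ≤ n → hasPeriod w a → hasPeriod w b →
    hasPeriod w (Nat.gcd a b) := by
  intro n
  induction n with
  | zero => intro a b w ha hab _ hb _ _; omega
  | succ m ih =>
    intro a b w ha hab hlen hb hpa hpb
    rcases eq_or_lt_of_le hab with rfl | hlt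
    · simpa using hpa
    · have hpb' : hasPeriod w (b - a) := by
        unfold hasPeriod
        intro i hi
        by_cases hc : i + b < w.length
        · have h1 := hasPeriod_getElem? hpb i hc
          have h2 := hasPeriod_getElem? hpa (i + (b - a)) (by omega)
          rw [h1, h2]
          congr 1
          omega
        · have hia : a ≤ i := by omega
          have h1 := hasPeriod_getElem? hpa (i - a) (by omega)
          have h2 := hasPeriod_getElem? hpb (i - a) (by omega)
          rw [show i - a + a = i by omega] at h1
          rw [show i - a + b = i + (b - a) by omega] at h2
          rw [← h1, h2]
      have hgcd : Nat.gcd a (b - a) = Nat.gcd a b := Nat.gcd_sub_self_right hab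
      rcases le_total a (b - a) with hc | hc
      · rw [← hgcd]
        exact ih a (b - a) w ha hc (by omega) (by omega) hpa hpb'
      · rw [← hgcd, Nat.gcd_comm]
        exact ih (b - a) a w (by omega) hc (by omega) (by omega) hpb' hpa

lemma fine_wilf {A : Type*} {a b : ℕ} {w : List A} (ha : 0 < a) (hb : 0 < b)
    (hlen : a + b ≤ w.length) (hpa : hasPeriod w a) (hpb : hasPeriod w b) :
    hasPeriod w (Nat.gcd a b) := by
  rcases le_total a b with h | h
  · exact fine_wilf_aux b a b w ha h hlen le_rfl hpa hpb
  · rw [Nat.gcd_comm]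
    exact fine_wilf_aux a b a w hb h (by omega) le_rfl hpb hpa

lemma word_period {A : Type*} {w p r : List A} {e : ℕ} (hp : p ≠ [])
    (hw : w = (List.replicate e p).flatten ++ r) (hr : r <+: p) :
    hasPeriod w p.length := by
  rw [join_def] at hw
  have hpre : w <+: (List.replicate (e + 1) p).flatten := by
    have hrepl : (List.replicate (e + 1) p).flatten
        = (List.replicate e p).flatten ++ p := by
      rw [List.replicate_succ', List.flatten_append]
      simp
    obtain ⟨t, ht⟩ := hr
    exact ⟨t, by rw [hrepl, hw, List.append_assoc, ht]⟩
  exact hasPeriod_of_prefix hpre (hasPeriod_flatten_replicate (e + 1) p hp)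

/-- Lemma 4.4: a `δ`-periodic word of length `≥ 2δ` with two decompositions
`w = p^e r = q^f s` (`p, q` primitive, `|p| ≤ |q| ≤ δ`, `r, s` nonempty prefixes
of `p, q`) satisfies `p = q`, `e = f ≥ 1` and `r = s`. -/
theorem stmt5 {A : Type*} (δ : ℕ) (w p q r s : List A) (e f : ℕ)
    (hper : ∃ d, 0 < d ∧ d ≤ δ ∧ hasPeriod w d)
    (hlen : 2 * δ ≤ w.length)
    (hw1 : w = (List.replicate e p).flatten ++ r)
    (hw2 : w = (List.replicate f q).flatten ++ s)
    (hp : Primitive p) (hq : Primitive q)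
    (hpq : p.length ≤ q.length) (hqδ : q.length ≤ δ)
    (hr : r ≠ [] ∧ r <+: p) (hs : s ≠ [] ∧ s <+: q) :
    p = q ∧ e = f ∧ 1 ≤ e ∧ r = s := by
  obtain ⟨d, hd0, hdδ, _⟩ := hper
  have hδ1 : 1 ≤ δ := by omega
  have hpne : p ≠ [] := hp.1
  have hqne : q ≠ [] := hq.1
  have hP : 0 < p.length := List.length_pos_iff.mpr hpne
  have hQ : 0 < q.length := List.length_pos_iff.mpr hqne
  have hrlen : r.length ≤ p.length := hr.2.length_le
  have hslen : s.length ≤ q.length := hs.2.length_le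
  have hrpos : 0 < r.length := List.length_pos_iff.mpr hr.1
  have hspos : 0 < s.length := List.length_pos_iff.mpr hs.1
  -- lengths
  have hwlen1 : w.length = e * p.length + r.length := by
    rw [hw1, List.length_append, join_def, length_flatten_replicate]
  have hwlen2 : w.length = f * q.length + s.length := by
    rw [hw2, List.length_append, join_def, length_flatten_replicate]
  -- e, f ≥ 1
  have he1 : 1 ≤ e := by
    by_contra hc
    have : e = 0 := by omega
    subst this
    simp at hwlen1
    omega
  have hf1 : 1 ≤ f := by
    by_contra hc
    have : f = 0 := by omega
    subst this
    simp at hwlen2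
    omega
  -- periods
  have hperp : hasPeriod w p.length := word_period hpne hw1 hr.2
  have hperq : hasPeriod w q.length := word_period hqne hw2 hs.2
  have hgcd : hasPeriod w (Nat.gcd p.length q.length) :=
    fine_wilf hP hQ (by omega) hperp hperq
  -- p is a prefix of w
  have hppre : p <+: w := by
    obtain ⟨e', rfl⟩ := Nat.exists_eq_add_of_le he1
    rw [Nat.add_comm 1 e'] at hw1
    rw [hw1, join_def, List.replicate_succ, List.flatten_cons, List.append_assoc]
    exact List.prefix_append _ _
  have hqpre : q <+: w := by
    obtain ⟨f', rfl⟩ := Nat.exists_eq_add_of_le hf1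
    rw [Nat.add_comm 1 f'] at hw2
    rw [hw2, join_def, List.replicate_succ, List.flatten_cons, List.append_assoc]
    exact List.prefix_append _ _
  -- gcd = p.length
  set g := Nat.gcd p.length q.length with hgdef
  have hg0 : 0 < g := Nat.gcd_pos_of_pos_left _ hP
  have hgdvdp : g ∣ p.length := Nat.gcd_dvd_left _ _
  have hgdvdq : g ∣ q.length := Nat.gcd_dvd_right _ _
  have hpg : hasPeriod p g := hasPeriod_of_prefix hppre hgcd
  have hgp : g = p.length := primitive_period hp hg0 hgdvdp hpg
  -- p.length ∣ q.length, q has period p.length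
  have hpdvdq : p.length ∣ q.length := hgp ▸ hgdvdq
  have hqperp : hasPeriod q p.length := hasPeriod_of_prefix hqpre hperp
  -- q = flatten (replicate (|q|/|p|) (q.take |p|)), with q.take |p| = p
  have hPlen : p.length = q.length := by
    rcases eq_or_lt_of_le hpq with heq | hlt
    · exact heq
    · exfalso
      have := primitive_period hq hP hpdvdq hqperp
      omega
  -- q.take p.length = p
  have hqtake : q.take p.length = p := by
    have h1 : w.take p.length = p := by
      obtain ⟨t, ht⟩ := hppre
      rw [← ht, List.take_left']
      rfl
    have h2 : w.take q.length = q := by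
      obtain ⟨t, ht⟩ := hqpre
      rw [← ht, List.take_left']
      rfl
    rw [← h2, List.take_take, Nat.min_eq_left hpq, h1]
  have hpq_eq : p = q := by
    rw [← hqtake, hPlen, List.take_length]
  subst hpq_eq
  -- now counting: e = f and r = s
  have hef : e = f := by
    rcases Nat.lt_trichotomy e f with hlt | heq | hgt
    · exfalso
      obtain ⟨k, hk⟩ := Nat.exists_eq_add_of_lt hlt
      rw [hk, Nat.add_mul, Nat.add_mul, Nat.one_mul] at hwlen2
      nlinarith [Nat.zero_le (k * p.length)]
    · exact heq
    · exfalso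
      obtain ⟨k, hk⟩ := Nat.exists_eq_add_of_lt hgt
      rw [hk, Nat.add_mul, Nat.add_mul, Nat.one_mul] at hwlen1
      nlinarith [Nat.zero_le (k * p.length)]
  subst hef
  have hrs : r = s := by
    have h1 : w.drop (e * p.length) = r := by
      rw [hw1]
      rw [List.drop_append_of_le_length (by rw [join_def, length_flatten_replicate])]
      rw [join_def, List.drop_of_length_le (by rw [length_flatten_replicate])]
      simp [length_flatten_replicate]
    have h2 : w.drop (e * p.length) = s := by
      rw [hw2]
      rw [List.drop_append_of_le_length (by rw [join_def, length_flatten_replicate])]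
      rw [join_def, List.drop_of_length_le (by rw [length_flatten_replicate])]
      simp [length_flatten_replicate]
    rw [← h1, h2]
  exact ⟨rfl, rfl, he1, hrs⟩
end

section
/- A nonempty word p is primitive if and only if p^2 cannot be written as p^2 = x·p·y with both x and y nonempty words. -/
private def pw {A : Type*} (t : List A) (n : ℕ) : List A := (List.replicate n t).flatten

private lemma pw_zero {A : Type*} (t : List A) : pw t 0 = [] := rfl

private lemma pw_succ {A : Type*} (t : List A) (n : ℕ) : pw t (n+1) = t ++ pw t n := by
  simp [pw, List.replicate_succ]

private lemma pw_add {A : Type*} (t : List A) (m n : ℕ) : pw t (m+n) = pw t m ++ pw t n := by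
  induction m with
  | zero => simp [pw_zero]
  | succ k ih => rw [Nat.succ_add, pw_succ, pw_succ, ih, List.append_assoc]

private lemma pw_length {A : Type*} (t : List A) (n : ℕ) : (pw t n).length = n * t.length := by
  induction n with
  | zero => simp [pw_zero]
  | succ k ih => rw [pw_succ]; simp [ih]; ring

private lemma comm_root {A : Type*} : ∀ n (x z : List A), x.length + z.length ≤ n →
    x ++ z = z ++ x → ∃ t a b, x = pw t a ∧ z = pw t b := by
  intro n
  induction n with
  | zero =>
    intro x z hl _
    have hx : x = [] := List.eq_nil_of_length_eq_zero (by omega)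
    have hz : z = [] := List.eq_nil_of_length_eq_zero (by omega)
    exact ⟨[], 0, 0, by simp [hx, pw_zero], by simp [hz, pw_zero]⟩
  | succ n ih =>
    intro x z hl hcomm
    rcases eq_or_ne x [] with hx | hx
    · exact ⟨z, 0, 1, by simp [hx, pw_zero], by simp [pw_succ, pw_zero]⟩
    rcases eq_or_ne z [] with hz | hz
    · exact ⟨x, 1, 0, by simp [pw_succ, pw_zero], by simp [hz, pw_zero]⟩
    rcases le_total x.length z.length with hle | hle
    · -- x is a prefix of z
      have hpx : x <+: z := by
        apply List.prefix_of_prefix_length_le (l₃ := z ++ x)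
        · rw [← hcomm]; exact ⟨z, rfl⟩
        · exact ⟨x, rfl⟩
        · exact hle
      obtain ⟨z', hz'⟩ := hpx
      have hcomm' : x ++ z' = z' ++ x := by
        have h1 := hcomm
        rw [← hz', List.append_assoc] at h1
        exact List.append_cancel_left h1
      have hxlen : 0 < x.length := List.length_pos_iff.2 hx
      have hlen' : x.length + z'.length ≤ n := by
        have := congrArg List.length hz'
        simp at this; omega
      obtain ⟨t, a, b, hxa, hzb⟩ := ih x z' hlen' hcomm'
      exact ⟨t, a, a + b, hxa, by rw [← hz', hxa, hzb, pw_add]⟩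
    · -- z is a prefix of x
      have hpz : z <+: x := by
        apply List.prefix_of_prefix_length_le (l₃ := x ++ z)
        · rw [hcomm]; exact ⟨x, rfl⟩
        · exact ⟨z, rfl⟩
        · exact hle
      obtain ⟨x', hx'⟩ := hpz
      have hcomm' : x' ++ z = z ++ x' := by
        have h1 := hcomm
        rw [← hx', List.append_assoc] at h1
        exact List.append_cancel_left h1
      have hzlen : 0 < z.length := List.length_pos_iff.2 hz
      have hlen' : x'.length + z.length ≤ n := by
        have := congrArg List.length hx'
        simp at this; omega
      obtain ⟨t, a, b, hxa, hzb⟩ := ih x' z hlen' hcomm'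
      exact ⟨t, b + a, b, by rw [← hx', hxa, hzb, pw_add], hzb⟩

/-- A nonempty word `p` is primitive iff `p²` has no factorization
`p² = x·p·y` with `x, y` both nonempty. -/
theorem stmt6 {A : Type*} (p : List A) (hp : p ≠ []) :
    Primitive p ↔ ¬∃ x y : List A, x ≠ [] ∧ y ≠ [] ∧ p ++ p = x ++ p ++ y := by
  constructor
  · rintro ⟨-, hprim⟩ ⟨x, y, hx, hy, heq⟩
    -- lengths
    have hlen : x.length + y.length = p.length := by
      have := congrArg List.length heq
      simp at this; omega
    have hxpos : 0 < x.length := List.length_pos_iff.2 hx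
    have hypos : 0 < y.length := List.length_pos_iff.2 hy
    -- x is a proper prefix of p
    have hpx : x <+: p := by
      apply List.prefix_of_prefix_length_le (l₃ := p ++ p)
      · rw [heq, List.append_assoc]; exact ⟨p ++ y, rfl⟩
      · exact ⟨p, rfl⟩
      · omega
    obtain ⟨z, hz⟩ := hpx
    have hzpos : 0 < z.length := by
      have := congrArg List.length hz; simp at this; omega
    -- derive z ++ x = x ++ z
    have key : (z ++ x) ++ z = (x ++ z) ++ y := by
      have h1 : x ++ ((z ++ x) ++ z) = x ++ ((x ++ z) ++ y) := by
        calc x ++ ((z ++ x) ++ z) = (x ++ z) ++ (x ++ z) := by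
              simp [List.append_assoc]
          _ = p ++ p := by rw [← hz]
          _ = (x ++ p) ++ y := heq
          _ = x ++ ((x ++ z) ++ y) := by rw [hz]; simp [List.append_assoc]
      exact List.append_cancel_left h1
    have hcomm : z ++ x = x ++ z ∧ z = y :=
      List.append_inj key (by simp; omega)
    obtain ⟨t, a, b, hxa, hzb⟩ := comm_root (x.length + z.length) x z le_rfl hcomm.1.symm
    have ha : 1 ≤ a := by
      by_contra h
      have : a = 0 := by omega
      rw [this, pw_zero] at hxa; exact hx hxa
    have hb : 1 ≤ b := by
      by_contra h
      have : b = 0 := by omega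
      rw [this, pw_zero] at hzb
      rw [hzb] at hzpos; simp at hzpos
    exact hprim t (a + b) (by omega) (by rw [← hz, hxa, hzb, ← pw_add]; rfl)
  · intro h
    refine ⟨hp, fun r e he hpe => h ?_⟩
    have hr : r ≠ [] := by
      rintro rfl
      apply hp
      rw [hpe]; simp
    refine ⟨r, pw r (e - 1), hr, ?_, ?_⟩
    · intro hnil
      have := congrArg List.length hnil
      rw [pw_length] at this
      simp at this
      rcases this with h1 | h2
      · omega
      · exact hr h2
    · have hpw : p = pw r e := hpe
      rw [hpw, List.append_assoc, ← pw_add, ← pw_add, ← pw_succ]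
      congr 1
      omega
end
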